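/- If χ₁ is σ₁-twisted positive definite and χ₂ is σ₂-twisted positive definite on the same real vector space Ξ, then the pointwise product χ₁·χ₂ is (σ₁+σ₂)-twisted positive definite (and likewise (s₁σ₁+s₂σ₂)-twisted positive definite after replacing each χ_i by its complex conjugate when s_i = −1). -/

import Mathlib

open Complex BigOperators

/-- The quadratic form associated to the σ-twisted matrix
`M_{kℓ} = χ(ξ_ℓ − ξ_k) · exp(−(i/2) σ(ξ_k, ξ_ℓ))`. -/
noncomputable def twistedSum {Ξ : Type*} [AddCommGroup Ξ] (σ : Ξ → Ξ → ℝ) (χ : Ξ → ℂ)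
    {N : ℕ} (ξ : Fin N → Ξ) (c : Fin N → ℂ) : ℂ :=
  ∑ k, ∑ l, (starRingEnd ℂ) (c k) * c l * χ (ξ l - ξ k) *
    Complex.exp (-(Complex.I / 2) * ((σ (ξ k) (ξ l) : ℝ) : ℂ))

/-- `χ` is σ-twisted positive definite: every matrix
`M_{kℓ} = χ(ξ_ℓ − ξ_k) exp(−(i/2)σ(ξ_k,ξ_ℓ))` is positive semidefinite, expressed
via nonnegativity of the associated quadratic form. -/
def IsTwistedPosDef {Ξ : Type*} [AddCommGroup Ξ] (σ : Ξ → Ξ → ℝ) (χ : Ξ → ℂ) : Prop :=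
  ∀ (N : ℕ) (ξ : Fin N → Ξ) (c : Fin N → ℂ),
    0 ≤ (twistedSum σ χ ξ c).re ∧ (twistedSum σ χ ξ c).im = 0

section Aux

open Matrix
open scoped ComplexOrder

/-- Polarization: a complex matrix whose quadratic form is real and nonnegative is PSD. -/
lemma posSemidef_of_quadform {n : Type*} [Fintype n] [DecidableEq n] (M : Matrix n n ℂ)
    (h : ∀ x : n → ℂ, 0 ≤ (star x ⬝ᵥ M *ᵥ x).re ∧ (star x ⬝ᵥ M *ᵥ x).im = 0) :
    M.PosSemidef := by
  have hHerm : M.IsHermitian := by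
    rw [Matrix.isHermitian_iff_isSymmetric,
      LinearMap.isSymmetric_iff_inner_map_self_real]
    intro v
    have him := (h ((WithLp.equiv 2 _) v)).2
    have key : (inner ℂ (M.toEuclideanLin v) v : ℂ) =
        (starRingEnd ℂ) (star ((WithLp.equiv 2 _) v) ⬝ᵥ M *ᵥ ((WithLp.equiv 2 _) v)) := by
      simp [Matrix.toEuclideanLin_apply, EuclideanSpace.inner_eq_star_dotProduct,
        dotProduct, Finset.sum_comm, map_sum, mul_comm]
    rw [Complex.conj_eq_iff_im, key]
    simpa using him
  refine Matrix.posSemidef_iff_dotProduct_mulVec.mpr ⟨hHerm, fun x => ?_⟩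
  have := h x
  rw [Complex.le_def]
  exact ⟨by simpa using this.1, by simpa using this.2.symm⟩

/-- Schur product theorem over ℂ. -/
lemma posSemidef_hadamard {n : Type*} [Fintype n] [DecidableEq n]
    {A B : Matrix n n ℂ} (hA : A.PosSemidef) (hB : B.PosSemidef) :
    (Matrix.hadamard A B).PosSemidef := by
  exact hA.hadamard hB

/-- The twisted matrix. -/
noncomputable def twMat {Ξ : Type*} [AddCommGroup Ξ] (σ : Ξ → Ξ → ℝ) (χ : Ξ → ℂ)
    {N : ℕ} (ξ : Fin N → Ξ) : Matrix (Fin N) (Fin N) ℂ :=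
  Matrix.of fun k l => χ (ξ l - ξ k) *
    Complex.exp (-(Complex.I / 2) * ((σ (ξ k) (ξ l) : ℝ) : ℂ))

lemma twistedSum_eq_quadform {Ξ : Type*} [AddCommGroup Ξ] (σ : Ξ → Ξ → ℝ) (χ : Ξ → ℂ)
    {N : ℕ} (ξ : Fin N → Ξ) (c : Fin N → ℂ) :
    twistedSum σ χ ξ c = star c ⬝ᵥ (twMat σ χ ξ) *ᵥ c := by
  simp only [twistedSum, twMat, dotProduct, Matrix.mulVec, Pi.star_apply,
    Matrix.of_apply, Finset.mul_sum, starRingEnd_apply]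
  exact Finset.sum_congr rfl fun k _ => Finset.sum_congr rfl fun l _ => by ring

lemma isTwistedPosDef_iff {Ξ : Type*} [AddCommGroup Ξ] (σ : Ξ → Ξ → ℝ) (χ : Ξ → ℂ) :
    IsTwistedPosDef σ χ ↔ ∀ (N : ℕ) (ξ : Fin N → Ξ), (twMat σ χ ξ).PosSemidef := by
  constructor
  · intro h N ξ
    apply posSemidef_of_quadform
    intro x
    rw [← twistedSum_eq_quadform]
    exact h N ξ x
  · intro h N ξ c
    rw [twistedSum_eq_quadform]
    have h2 := (h N ξ).dotProduct_mulVec_nonneg c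
    rw [Complex.le_def] at h2
    exact ⟨by simpa using h2.1, by simpa using h2.2.symm⟩

lemma twMat_conj {Ξ : Type*} [AddCommGroup Ξ] (σ : Ξ → Ξ → ℝ) (χ : Ξ → ℂ)
    {N : ℕ} (ξ : Fin N → Ξ) :
    twMat (fun a b => -σ a b) (fun v => (starRingEnd ℂ) (χ v)) ξ = ((twMat σ χ ξ)ᴴ)ᵀ := by
  ext k l
  simp only [twMat, Matrix.of_apply, Matrix.transpose_apply, Matrix.conjTranspose_apply,
    ← starRingEnd_apply]
  rw [_root_.map_mul]
  congr 1
  rw [← Complex.exp_conj]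
  congr 1
  · simp only [_root_.map_mul, map_neg, map_div₀, Complex.conj_I, Complex.conj_ofReal,
      Complex.ofReal_neg, map_ofNat]
    ring

lemma isTwistedPosDef_conj {Ξ : Type*} [AddCommGroup Ξ] {σ : Ξ → Ξ → ℝ} {χ : Ξ → ℂ}
    (h : IsTwistedPosDef σ χ) :
    IsTwistedPosDef (fun a b => -σ a b) (fun v => (starRingEnd ℂ) (χ v)) := by
  rw [isTwistedPosDef_iff] at h ⊢
  intro N ξ
  rw [twMat_conj]
  exact ((h N ξ).isHermitian.symm ▸ (h N ξ) : ((twMat σ χ ξ)ᴴ).PosSemidef).transpose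

lemma twMat_mul {Ξ : Type*} [AddCommGroup Ξ] (σa σb : Ξ → Ξ → ℝ) (χa χb : Ξ → ℂ)
    {N : ℕ} (ξ : Fin N → Ξ) :
    twMat (fun a b => σa a b + σb a b) (fun v => χa v * χb v) ξ =
      Matrix.hadamard (twMat σa χa ξ) (twMat σb χb ξ) := by
  ext k l
  simp only [twMat, Matrix.of_apply, Matrix.hadamard_apply, Complex.ofReal_add, mul_add,
    Complex.exp_add]
  ring

lemma isTwistedPosDef_mul {Ξ : Type*} [AddCommGroup Ξ] {σa σb : Ξ → Ξ → ℝ} {χa χb : Ξ → ℂ}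
    (ha : IsTwistedPosDef σa χa) (hb : IsTwistedPosDef σb χb) :
    IsTwistedPosDef (fun a b => σa a b + σb a b) (fun v => χa v * χb v) := by
  rw [isTwistedPosDef_iff] at ha hb ⊢
  intro N ξ
  rw [twMat_mul]
  exact posSemidef_hadamard (ha N ξ) (hb N ξ)

end Aux

/-- The pointwise product of a σ₁- and a σ₂-twisted positive definite function
on the same space is (σ₁+σ₂)-twisted positive definite, and likewise for any signs
s₁, s₂ ∈ {±1} after replacing χᵢ by its complex conjugate when sᵢ = −1. -/
theorem twisted_posdef_product_signs {Ξ : Type*} [AddCommGroup Ξ] [Module ℝ Ξ]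
    (σ₁ σ₂ : Ξ →ₗ[ℝ] Ξ →ₗ[ℝ] ℝ)
    (h₁ : ∀ ξ η : Ξ, σ₁ ξ η = - σ₁ η ξ) (h₂ : ∀ ξ η : Ξ, σ₂ ξ η = - σ₂ η ξ)
    (χ₁ χ₂ : Ξ → ℂ)
    (hχ₁ : IsTwistedPosDef (fun ξ η => σ₁ ξ η) χ₁)
    (hχ₂ : IsTwistedPosDef (fun ξ η => σ₂ ξ η) χ₂) :
    IsTwistedPosDef (fun ξ η => σ₁ ξ η + σ₂ ξ η) (fun ξ => χ₁ ξ * χ₂ ξ) ∧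
    IsTwistedPosDef (fun ξ η => - σ₁ ξ η + σ₂ ξ η)
      (fun ξ => (starRingEnd ℂ) (χ₁ ξ) * χ₂ ξ) ∧
    IsTwistedPosDef (fun ξ η => σ₁ ξ η - σ₂ ξ η)
      (fun ξ => χ₁ ξ * (starRingEnd ℂ) (χ₂ ξ)) ∧
    IsTwistedPosDef (fun ξ η => - σ₁ ξ η - σ₂ ξ η)
      (fun ξ => (starRingEnd ℂ) (χ₁ ξ) * (starRingEnd ℂ) (χ₂ ξ)) := by
  refine ⟨isTwistedPosDef_mul hχ₁ hχ₂, isTwistedPosDef_mul (isTwistedPosDef_conj hχ₁) hχ₂,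
    ?_, ?_⟩
  · have := isTwistedPosDef_mul hχ₁ (isTwistedPosDef_conj hχ₂)
    have hσ : (fun ξ η => σ₁ ξ η + -σ₂ ξ η) = (fun ξ η => σ₁ ξ η - σ₂ ξ η) := by
      funext ξ η; ring
    rwa [hσ] at this
  · have := isTwistedPosDef_mul (isTwistedPosDef_conj hχ₁) (isTwistedPosDef_conj hχ₂)
    have hσ : (fun ξ η => -σ₁ ξ η + -σ₂ ξ η) = (fun ξ η => -σ₁ ξ η - σ₂ ξ η) := by
      funext ξ η; ring
    rwa [hσ] at this
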